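/- Let W and Z be real d×k matrices partitioned into n row blocks, and let S ⊆ [n] be a set of block indices with complement S^c. Suppose ‖Z_i‖_F < 1 for every block i ∈ S^c, ‖Z_i‖_F ≤ 1 for every i ∈ S, and ⟨Z, W⟩ = ‖W‖_{B,2,1} = Σ_i ‖W_i‖_F. Then W_i = 0 for every i ∈ S^c. -/
import Mathlib


open scoped BigOperators

/-- Frobenius norm of the `i`-th row block of a row-block-partitioned matrix. -/
noncomputable def blockFrob {n k : ℕ} {d : Fin n → ℕ}
    (W : Matrix ((i : Fin n) × Fin (d i)) (Fin k) ℝ) (i : Fin n) : ℝ :=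
  Real.sqrt (∑ a, ∑ j, (W ⟨i, a⟩ j)^2)

lemma block_cs {n k : ℕ} {d : Fin n → ℕ}
    (W Z : Matrix ((i : Fin n) × Fin (d i)) (Fin k) ℝ) (i : Fin n) :
    ∑ a, ∑ j, Z ⟨i, a⟩ j * W ⟨i, a⟩ j ≤ blockFrob Z i * blockFrob W i := by
  have h := Real.sum_mul_le_sqrt_mul_sqrt (Finset.univ : Finset (Fin (d i) × Fin k))
      (fun p => Z ⟨i, p.1⟩ p.2) (fun p => W ⟨i, p.1⟩ p.2)
  simpa [blockFrob, Fintype.sum_prod_type] using h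

/-- Strict dual feasibility forces zero blocks: if `‖Z_i‖_F < 1` on `Sᶜ`,
`‖Z_i‖_F ≤ 1` on `S`, and `⟨Z, W⟩ = Σ_i ‖W_i‖_F`, then `W_i = 0` for `i ∈ Sᶜ`. -/
theorem stmt6 {n k : ℕ} {d : Fin n → ℕ} (S : Set (Fin n))
    (W Z : Matrix ((i : Fin n) × Fin (d i)) (Fin k) ℝ)
    (hZc : ∀ i ∉ S, blockFrob Z i < 1)
    (hZ : ∀ i ∈ S, blockFrob Z i ≤ 1)
    (halign : ∑ p, ∑ j, Z p j * W p j = ∑ i, blockFrob W i) :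
    ∀ i ∉ S, ∀ (a : Fin (d i)) (j : Fin k), W ⟨i, a⟩ j = 0 := by
  have hWnn : ∀ i, 0 ≤ blockFrob W i := fun i => Real.sqrt_nonneg _
  have hsum : ∑ i, (∑ a, ∑ j, Z ⟨i, a⟩ j * W ⟨i, a⟩ j) = ∑ i, blockFrob W i := by
    rw [← halign, ← Finset.univ_sigma_univ, Finset.sum_sigma]
  have hle : ∀ i ∈ Finset.univ,
      (∑ a, ∑ j, Z ⟨i, a⟩ j * W ⟨i, a⟩ j) ≤ blockFrob W i := by
    intro i _
    have h1 := block_cs W Z i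
    have h2 : blockFrob Z i ≤ 1 := by
      by_cases hi : i ∈ S
      · exact hZ i hi
      · exact (hZc i hi).le
    calc ∑ a, ∑ j, Z ⟨i, a⟩ j * W ⟨i, a⟩ j ≤ blockFrob Z i * blockFrob W i := h1
      _ ≤ 1 * blockFrob W i := mul_le_mul_of_nonneg_right h2 (hWnn i)
      _ = blockFrob W i := one_mul _
  have heq : ∀ i ∈ Finset.univ,
      (∑ a, ∑ j, Z ⟨i, a⟩ j * W ⟨i, a⟩ j) = blockFrob W i :=
    fun i hi => (Finset.sum_eq_sum_iff_of_le hle).1 hsum i hi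
  intro i hi a j
  have hW0 : blockFrob W i = 0 := by
    by_contra hne
    have hpos : 0 < blockFrob W i := lt_of_le_of_ne (hWnn i) (Ne.symm hne)
    have h1 := block_cs W Z i
    have h2 : blockFrob Z i * blockFrob W i < blockFrob W i := by
      calc blockFrob Z i * blockFrob W i < 1 * blockFrob W i :=
            mul_lt_mul_of_pos_right (hZc i hi) hpos
        _ = blockFrob W i := one_mul _
    have := heq i (Finset.mem_univ i)
    linarith
  have hsq : ∑ a, ∑ j, (W ⟨i, a⟩ j)^2 = 0 := by
    have hnn : 0 ≤ ∑ a, ∑ j, (W ⟨i, a⟩ j)^2 :=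
      Finset.sum_nonneg fun _ _ => Finset.sum_nonneg fun _ _ => sq_nonneg _
    have := Real.sqrt_eq_zero hnn |>.1 hW0
    exact this
  have h1 : ∀ a ∈ Finset.univ, (∑ j, (W ⟨i, a⟩ j)^2) = 0 := by
    intro a _
    have := (Finset.sum_eq_zero_iff_of_nonneg (fun b _ =>
      Finset.sum_nonneg fun j _ => sq_nonneg (W ⟨i, b⟩ j))).1 hsq
    exact this a (Finset.mem_univ a)
  have h2 := (Finset.sum_eq_zero_iff_of_nonneg (fun j _ => sq_nonneg (W ⟨i, a⟩ j))).1
      (h1 a (Finset.mem_univ a)) j (Finset.mem_univ j)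
  exact pow_eq_zero_iff (by norm_num) |>.1 h2
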